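/- Let ≽ be a preference on ℝ^d_+ that is continuous and monotone, and let φ : ℝ^d_+ × ℝ^d_+ → ℝ_+ and Θ ≥ 0 be such that ≽ satisfies φ-approximate independence and Σ_{i=0}^{n} 2^{−i} φ(2^i x, 2^i y) ≤ Θ for all n ≥ 1 and all x, y ∈ ℝ^d_+. Then there exist a function u : ℝ^d_+ → ℝ and a linear function v : ℝ^d → ℝ such that u is a normalized representation of ≽ and sup_{x ∈ ℝ^d_+} |u(x) − v(x)| ≤ Θ. -/
import Mathlib

/-- Theorem `thm:AA`, part 1: a continuous, monotone preference on
`ℝ^d₊` satisfying φ-approximate independence, with the weighted sums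
`∑_{i=0}^n 2^{-i} φ(2^i x, 2^i y)` bounded by `Θ`, admits a normalized representation
`u` and a linear `v` with `|u - v| ≤ Θ` on `ℝ^d₊`. -/
theorem stmt_6 (d : ℕ) (R : (Fin d → ℝ) → (Fin d → ℝ) → Prop)
    (hcomp : ∀ x y : Fin d → ℝ, 0 ≤ x → 0 ≤ y → R x y ∨ R y x)
    (htrans : ∀ x y z : Fin d → ℝ, 0 ≤ x → 0 ≤ y → 0 ≤ z → R x y → R y z → R x z)
    (hcont : ∀ x : Fin d → ℝ, 0 ≤ x →
      IsClosed {z : Fin d → ℝ | 0 ≤ z ∧ R z x} ∧ IsClosed {z : Fin d → ℝ | 0 ≤ z ∧ R x z})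
    (hmono : ∀ x y : Fin d → ℝ, 0 ≤ x → x ≤ y → R y x)
    (hmono' : ∀ x y : Fin d → ℝ, 0 ≤ x → (∀ i, x i < y i) → R y x ∧ ¬ R x y)
    (φ : (Fin d → ℝ) → (Fin d → ℝ) → ℝ) (hφ : ∀ x y, 0 ≤ φ x y)
    (Θ : ℝ) (hΘ : 0 ≤ Θ)
    (hindep : ∀ x y : Fin d → ℝ, 0 ≤ x → 0 ≤ y →
      ∀ cbx cux cby cuy : ℝ, 0 ≤ cbx → 0 ≤ cux → 0 ≤ cby → 0 ≤ cuy →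
      R (fun _ => cbx) x → R x (fun _ => cux) →
      R (fun _ => cby) y → R y (fun _ => cuy) →
      R (fun _ => cbx / 2 + cby / 2 + φ x y) ((1 / 2 : ℝ) • x + (1 / 2 : ℝ) • y) ∧
      R ((1 / 2 : ℝ) • x + (1 / 2 : ℝ) • y) (fun _ => cux / 2 + cuy / 2 - φ x y))
    (hsum : ∀ n : ℕ, 1 ≤ n → ∀ x y : Fin d → ℝ, 0 ≤ x → 0 ≤ y →
      ∑ i ∈ Finset.range (n + 1), (1 / 2 : ℝ) ^ i * φ ((2 : ℝ) ^ i • x) ((2 : ℝ) ^ i • y) ≤ Θ) :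
    ∃ u v : (Fin d → ℝ) → ℝ,
      (∀ x y : Fin d → ℝ, 0 ≤ x → 0 ≤ y → (R x y ↔ u y ≤ u x)) ∧
      (∀ c : ℝ, 0 ≤ c → u (fun _ => c) = c) ∧
      IsLinearMap ℝ v ∧
      (∀ x : Fin d → ℝ, 0 ≤ x → |u x - v x| ≤ Θ) := by
  classical
  rcases Nat.eq_zero_or_pos d with hd | hd
  · subst hd
    exact absurd (hmono' 0 0 le_rfl (fun i => i.elim0)).1 (hmono' 0 0 le_rfl (fun i => i.elim0)).2
  have hKnn : ∀ {c : ℝ}, 0 ≤ c → (0 : Fin d → ℝ) ≤ fun _ => c := fun hc i => hc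
  have hrefl : ∀ x : Fin d → ℝ, 0 ≤ x → R x x := fun x hx => hmono x x hx le_rfl
  -- existence of a certainty equivalent
  have hCE : ∀ x : Fin d → ℝ, 0 ≤ x →
      ∃ c : ℝ, 0 ≤ c ∧ R x (fun _ => c) ∧ R (fun _ => c) x := by
    intro x hx
    have hKcont : Continuous (fun c : ℝ => (fun _ => c : Fin d → ℝ)) :=
      continuous_pi fun _ => continuous_id
    set A : Set ℝ := {c | 0 ≤ c ∧ R x (fun _ => c)} with hA
    set B : Set ℝ := {c | 0 ≤ c ∧ R (fun _ => c) x} with hB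
    have hAc : IsClosed A := by
      have h1 : A = (fun c : ℝ => (fun _ => c : Fin d → ℝ)) ⁻¹' {z | 0 ≤ z ∧ R x z} ∩ Set.Ici 0 := by
        ext c
        constructor
        · rintro ⟨hc, hcr⟩; exact ⟨⟨fun i => hc, hcr⟩, hc⟩
        · rintro ⟨⟨_, hcr⟩, hc⟩; exact ⟨hc, hcr⟩
      rw [h1]
      exact (((hcont x hx).2).preimage hKcont).inter isClosed_Ici
    have hBc : IsClosed B := by
      have h1 : B = (fun c : ℝ => (fun _ => c : Fin d → ℝ)) ⁻¹' {z | 0 ≤ z ∧ R z x} ∩ Set.Ici 0 := by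
        ext c
        constructor
        · rintro ⟨hc, hcr⟩; exact ⟨⟨fun i => hc, hcr⟩, hc⟩
        · rintro ⟨⟨_, hcr⟩, hc⟩; exact ⟨hc, hcr⟩
      rw [h1]
      exact (((hcont x hx).1).preimage hKcont).inter isClosed_Ici
    set c₀ : ℝ := ∑ i, x i with hc₀def
    have hc₀ : 0 ≤ c₀ := Finset.sum_nonneg fun i _ => hx i
    have hxle : x ≤ fun _ => c₀ := fun i =>
      Finset.single_le_sum (f := x) (fun j _ => hx j) (Finset.mem_univ i)
    have hcover : Set.Icc (0:ℝ) c₀ ⊆ A ∪ B := by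
      intro c hc
      rcases hcomp x (fun _ => c) hx (hKnn hc.1) with h | h
      · exact Or.inl ⟨hc.1, h⟩
      · exact Or.inr ⟨hc.1, h⟩
    have h0A : (Set.Icc (0:ℝ) c₀ ∩ A).Nonempty :=
      ⟨0, ⟨le_rfl, hc₀⟩, le_rfl, hmono (fun _ => 0) x (hKnn le_rfl) (fun i => hx i)⟩
    have hc₀B : (Set.Icc (0:ℝ) c₀ ∩ B).Nonempty :=
      ⟨c₀, ⟨hc₀, le_rfl⟩, hc₀, hmono x (fun _ => c₀) hx hxle⟩
    obtain ⟨c, _, ⟨hcA1, hcA2⟩, _, hcB2⟩ :=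
      isPreconnected_closed_iff.mp isPreconnected_Icc A B hAc hBc hcover h0A hc₀B
    exact ⟨c, hcA1, hcA2, hcB2⟩
  choose! u hu1 hu2 hu3 using hCE
  -- uniqueness of the certainty equivalent
  have hueq : ∀ x : Fin d → ℝ, 0 ≤ x → ∀ c : ℝ, 0 ≤ c →
      R x (fun _ => c) → R (fun _ => c) x → u x = c := by
    intro x hx c hc h1 h2
    by_contra hne
    rcases lt_or_gt_of_ne hne with hlt | hlt
    · have := (hmono' (fun _ => u x) (fun _ => c) (hKnn (hu1 x hx)) (fun i => hlt)).2
      exact this (htrans _ x _ (hKnn (hu1 x hx)) hx (hKnn hc) (hu3 x hx) h1)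
    · have := (hmono' (fun _ => c) (fun _ => u x) (hKnn hc) (fun i => hlt)).2
      exact this (htrans _ x _ (hKnn hc) hx (hKnn (hu1 x hx)) h2 (hu2 x hx))
  have hnorm : ∀ c : ℝ, 0 ≤ c → u (fun _ => c) = c := fun c hc =>
    hueq _ (hKnn hc) c hc (hrefl _ (hKnn hc)) (hrefl _ (hKnn hc))
  -- representation
  have hrep : ∀ x y : Fin d → ℝ, 0 ≤ x → 0 ≤ y → (R x y ↔ u y ≤ u x) := by
    intro x y hx hy
    constructor
    · intro hxy
      by_contra hlt
      push_neg at hlt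
      have h1 : R x (fun _ => u y) :=
        htrans x y _ hx hy (hKnn (hu1 y hy)) hxy (hu2 y hy)
      have h2 : R (fun _ => u x) (fun _ => u y) :=
        htrans _ x _ (hKnn (hu1 x hx)) hx (hKnn (hu1 y hy)) (hu3 x hx) h1
      exact (hmono' (fun _ => u x) (fun _ => u y) (hKnn (hu1 x hx)) (fun i => hlt)).2 h2
    · intro hle
      have hK : R (fun _ => u x) (fun _ => u y) :=
        hmono (fun _ => u y) (fun _ => u x) (hKnn (hu1 y hy)) (fun i => hle)
      have h1 : R x (fun _ => u y) :=
        htrans x _ _ hx (hKnn (hu1 x hx)) (hKnn (hu1 y hy)) (hu2 x hx) hK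
      exact htrans x _ y hx (hKnn (hu1 y hy)) hy h1 (hu3 y hy)
  have hle : ∀ x : Fin d → ℝ, 0 ≤ x → ∀ c : ℝ, 0 ≤ c → R (fun _ => c) x → u x ≤ c := by
    intro x hx c hc h
    have := (hrep _ x (hKnn hc) hx).1 h
    rwa [hnorm c hc] at this
  have hge : ∀ x : Fin d → ℝ, 0 ≤ x → ∀ c : ℝ, 0 ≤ c → R x (fun _ => c) → c ≤ u x := by
    intro x hx c hc h
    have := (hrep x _ hx (hKnn hc)).1 h
    rwa [hnorm c hc] at this
  have hmu : ∀ x y : Fin d → ℝ, 0 ≤ x → x ≤ y → u x ≤ u y := by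
    intro x y hx hxy
    exact (hrep y x (le_trans hx hxy) hx).1 (hmono x y hx hxy)
  -- midpoint bound
  have hmid : ∀ x y : Fin d → ℝ, 0 ≤ x → 0 ≤ y →
      |u ((1/2:ℝ) • x + (1/2:ℝ) • y) - (u x / 2 + u y / 2)| ≤ φ x y := by
    intro x y hx hy
    have hm : 0 ≤ (1/2:ℝ) • x + (1/2:ℝ) • y := by
      intro i
      simp only [Pi.add_apply, Pi.smul_apply, smul_eq_mul, Pi.zero_apply]
      have h1 : (0:ℝ) ≤ x i := hx i; have h2 : (0:ℝ) ≤ y i := hy i; linarith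
    obtain ⟨hup, hdown⟩ := hindep x y hx hy (u x) (u x) (u y) (u y)
      (hu1 x hx) (hu1 x hx) (hu1 y hy) (hu1 y hy)
      (hu3 x hx) (hu2 x hx) (hu3 y hy) (hu2 y hy)
    have hupper : u ((1/2:ℝ) • x + (1/2:ℝ) • y) ≤ u x / 2 + u y / 2 + φ x y := by
      refine hle _ hm _ ?_ hup
      have := hu1 x hx; have := hu1 y hy; have := hφ x y; linarith
    have hlower : u x / 2 + u y / 2 - φ x y ≤ u ((1/2:ℝ) • x + (1/2:ℝ) • y) := by
      rcases le_or_gt 0 (u x / 2 + u y / 2 - φ x y) with h | h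
      · exact hge _ hm _ h hdown
      · linarith [hu1 _ hm]
    rw [abs_le]; constructor <;> linarith
  set a : (Fin d → ℝ) → ℕ → ℝ := fun x n => (1/2:ℝ)^n * u ((2:ℝ)^n • x) with ha
  have hpow : ∀ (n : ℕ) (x : Fin d → ℝ), (1/2:ℝ) • ((2:ℝ)^(n+1) • x) = (2:ℝ)^n • x := by
    intro n x
    rw [smul_smul]
    norm_num [pow_succ]
    ring_nf
  have h2nn : ∀ (n : ℕ) (x : Fin d → ℝ), 0 ≤ x → 0 ≤ (2:ℝ)^n • x := by
    intro n x hx i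
    simp only [Pi.smul_apply, smul_eq_mul, Pi.zero_apply]
    exact mul_nonneg (by positivity) (hx i : (0:ℝ) ≤ x i)
  have u0 : u 0 = 0 := hnorm 0 le_rfl
  have hstep : ∀ x : Fin d → ℝ, 0 ≤ x → ∀ n : ℕ,
      |a x n - a x (n+1)| ≤ (1/2:ℝ)^n * φ ((2:ℝ)^(n+1) • x) 0 := by
    intro x hx n
    have h := hmid ((2:ℝ)^(n+1) • x) 0 (h2nn (n+1) x hx) le_rfl
    rw [smul_zero, add_zero, hpow n x, u0] at h
    have heq : a x n - a x (n+1)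
        = (1/2:ℝ)^n * (u ((2:ℝ)^n • x) - (u ((2:ℝ)^(n+1) • x) / 2 + 0 / 2)) := by
      simp only [ha, pow_succ]; ring
    rw [heq, abs_mul, abs_of_nonneg (by positivity : (0:ℝ) ≤ (1/2:ℝ)^n)]
    exact mul_le_mul_of_nonneg_left h (by positivity)
  have hΘsum : ∀ x : Fin d → ℝ, 0 ≤ x → ∀ N : ℕ,
      ∑ n ∈ Finset.range N, (1/2:ℝ)^n * φ ((2:ℝ)^(n+1) • x) 0 ≤ Θ := by
    intro x hx N
    have h2 : ∀ i : ℕ, (2:ℝ)^i • ((2:ℝ) • x) = (2:ℝ)^(i+1) • x := by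
      intro i; rw [smul_smul, ← pow_succ]
    have h2x : 0 ≤ (2:ℝ) • x := by
      intro i; simp only [Pi.smul_apply, smul_eq_mul, Pi.zero_apply]
      exact mul_nonneg (by norm_num) (hx i : (0:ℝ) ≤ x i)
    have hs := hsum (max N 1) (le_max_right _ _) ((2:ℝ) • x) 0 h2x le_rfl
    simp only [h2, smul_zero] at hs
    refine le_trans ?_ hs
    refine Finset.sum_le_sum_of_subset_of_nonneg ?_ ?_
    · exact Finset.range_subset_range.2 (by omega)
    · intro i _ _; exact mul_nonneg (by positivity) (hφ _ _)
  have hsummable : ∀ x : Fin d → ℝ, 0 ≤ x →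
      Summable (fun n => (1/2:ℝ)^n * φ ((2:ℝ)^(n+1) • x) 0) := by
    intro x hx
    exact summable_of_sum_range_le (fun n => mul_nonneg (by positivity) (hφ _ _)) (hΘsum x hx)
  have hlimex : ∀ x : Fin d → ℝ, 0 ≤ x →
      ∃ l : ℝ, Filter.Tendsto (fun n => a x n) Filter.atTop (nhds l) := by
    intro x hx
    have hc : CauchySeq (a x) := by
      refine cauchySeq_of_dist_le_of_summable _ ?_ (hsummable x hx)
      intro n
      rw [Real.dist_eq]
      exact hstep x hx n
    exact cauchySeq_tendsto_of_complete hc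
  choose! w hw using hlimex
  have hUW : ∀ x : Fin d → ℝ, 0 ≤ x → |u x - w x| ≤ Θ := by
    intro x hx
    have h0 : a x 0 = u x := by simp [ha]
    have htend : Filter.Tendsto (fun N => |a x 0 - a x N|) Filter.atTop (nhds (|a x 0 - w x|)) :=
      (Filter.Tendsto.sub tendsto_const_nhds (hw x hx)).abs
    have hb : ∀ N, |a x 0 - a x N| ≤ Θ := by
      intro N
      calc |a x 0 - a x N| = dist (a x 0) (a x N) := (Real.dist_eq _ _).symm
        _ ≤ ∑ n ∈ Finset.range N, dist (a x n) (a x (n+1)) := dist_le_range_sum_dist _ N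
        _ ≤ ∑ n ∈ Finset.range N, (1/2:ℝ)^n * φ ((2:ℝ)^(n+1) • x) 0 :=
            Finset.sum_le_sum (fun n _ => by rw [Real.dist_eq]; exact hstep x hx n)
        _ ≤ Θ := hΘsum x hx N
    rw [← h0]
    exact le_of_tendsto htend (Filter.Eventually.of_forall hb)
  have hwnn : ∀ x : Fin d → ℝ, 0 ≤ x → 0 ≤ w x := by
    intro x hx
    refine ge_of_tendsto (hw x hx) (Filter.Eventually.of_forall fun n => ?_)
    exact mul_nonneg (by positivity) (hu1 _ (h2nn n x hx))
  have w0 : w 0 = 0 := by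
    have h1 : (fun n => a 0 n) = fun _ : ℕ => (0:ℝ) := by
      funext n; simp [ha, u0]
    have := hw 0 le_rfl
    rw [h1] at this
    exact tendsto_nhds_unique this tendsto_const_nhds
  -- summability of the main series
  have hsummable2 : ∀ x y : Fin d → ℝ, 0 ≤ x → 0 ≤ y →
      Summable (fun n => (1/2:ℝ)^n * φ ((2:ℝ)^n • x) ((2:ℝ)^n • y)) := by
    intro x y hx hy
    refine summable_of_sum_range_le (c := Θ) (fun n => mul_nonneg (by positivity) (hφ _ _)) ?_
    intro N
    have hs := hsum (max N 1) (le_max_right _ _) x y hx hy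
    refine le_trans ?_ hs
    refine Finset.sum_le_sum_of_subset_of_nonneg (Finset.range_subset_range.2 (by omega)) ?_
    intro i _ _; exact mul_nonneg (by positivity) (hφ _ _)
  have hadd : ∀ x y : Fin d → ℝ, 0 ≤ x → 0 ≤ y → w (x + y) = w x + w y := by
    intro x y hx hy
    have hxy : 0 ≤ x + y := add_nonneg hx hy
    set t : ℕ → ℝ := fun n => (1/2:ℝ)^n * φ ((2:ℝ)^n • x) ((2:ℝ)^n • y) with hts
    have hb : ∀ n : ℕ, |a (x+y) n - (a x (n+1) + a y (n+1))| ≤ 2 * t (n+1) := by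
      intro n
      have hmidn := hmid ((2:ℝ)^(n+1) • x) ((2:ℝ)^(n+1) • y) (h2nn _ x hx) (h2nn _ y hy)
      have heq : (1/2:ℝ) • ((2:ℝ)^(n+1) • x) + (1/2:ℝ) • ((2:ℝ)^(n+1) • y)
          = (2:ℝ)^n • (x + y) := by
        rw [hpow n x, hpow n y, smul_add]
      rw [heq] at hmidn
      have heq2 : a (x+y) n - (a x (n+1) + a y (n+1))
          = (1/2:ℝ)^n * (u ((2:ℝ)^n • (x+y))
            - (u ((2:ℝ)^(n+1) • x) / 2 + u ((2:ℝ)^(n+1) • y) / 2)) := by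
        simp only [ha, pow_succ]; ring
      rw [heq2, abs_mul, abs_of_nonneg (by positivity : (0:ℝ) ≤ (1/2:ℝ)^n)]
      have := mul_le_mul_of_nonneg_left hmidn (by positivity : (0:ℝ) ≤ (1/2:ℝ)^n)
      refine le_trans this ?_
      simp only [hts, pow_succ]; ring_nf; rfl
    have htzero : Filter.Tendsto (fun n => 2 * t (n+1)) Filter.atTop (nhds 0) := by
      have h1 : Filter.Tendsto t Filter.atTop (nhds 0) :=
        (hsummable2 x y hx hy).tendsto_atTop_zero
      have h2 := h1.comp (Filter.tendsto_add_atTop_nat 1)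
      have := h2.const_mul (2:ℝ)
      simpa using this
    have h1 : Filter.Tendsto (fun n => a (x+y) n - (a x (n+1) + a y (n+1)))
        Filter.atTop (nhds (w (x+y) - (w x + w y))) := by
      refine Filter.Tendsto.sub (hw _ hxy) ?_
      exact Filter.Tendsto.add ((hw x hx).comp (Filter.tendsto_add_atTop_nat 1))
        ((hw y hy).comp (Filter.tendsto_add_atTop_nat 1))
    have h2 : Filter.Tendsto (fun n => a (x+y) n - (a x (n+1) + a y (n+1)))
        Filter.atTop (nhds 0) := by
      refine squeeze_zero_norm (fun n => ?_) htzero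
      rw [Real.norm_eq_abs]; exact hb n
    have := tendsto_nhds_unique h1 h2
    linarith
  have hwmono : ∀ x y : Fin d → ℝ, 0 ≤ x → x ≤ y → w x ≤ w y := by
    intro x y hx hxy
    have hy : 0 ≤ y := le_trans hx hxy
    refine le_of_tendsto_of_tendsto' (hw x hx) (hw y hy) fun n => ?_
    refine mul_le_mul_of_nonneg_left (hmu _ _ (h2nn n x hx) fun i => ?_) (by positivity)
    simp only [Pi.smul_apply, smul_eq_mul]
    exact mul_le_mul_of_nonneg_left (hxy i) (by positivity)
  have hnat : ∀ (n : ℕ) (x : Fin d → ℝ), 0 ≤ x → w ((n:ℝ) • x) = n * w x := by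
    intro n
    induction n with
    | zero => intro x hx; simp [w0]
    | succ n ih =>
      intro x hx
      have heq : ((n+1:ℕ):ℝ) • x = (n:ℝ) • x + x := by
        push_cast; rw [add_smul, one_smul]
      have hnx : 0 ≤ (n:ℝ) • x := smul_nonneg (Nat.cast_nonneg n) hx
      rw [heq, hadd _ x hnx hx, ih x hx]
      push_cast; ring
  have hhom : ∀ t : ℝ, 0 ≤ t → ∀ x : Fin d → ℝ, 0 ≤ x → w (t • x) = t * w x := by
    intro t ht x hx
    have hxw : 0 ≤ w x := hwnn x hx
    have hmt : ∀ s s' : ℝ, 0 ≤ s → s ≤ s' → w (s • x) ≤ w (s' • x) := by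
      intro s s' hs hss'
      refine hwmono _ _ (smul_nonneg hs hx) fun i => ?_
      simp only [Pi.smul_apply, smul_eq_mul]
      exact mul_le_mul_of_nonneg_right hss' (hx i)
    have hq : ∀ q : ℚ, 0 ≤ q → w ((q:ℝ) • x) = (q:ℝ) * w x := by
      intro q hq0
      have hq0' : (0:ℝ) ≤ (q:ℝ) := by exact_mod_cast hq0
      have hnum : (0:ℤ) ≤ q.num := Rat.num_nonneg.2 hq0
      have h1 := hnat q.den ((q:ℝ) • x) (smul_nonneg hq0' hx)
      rw [smul_smul] at h1
      have h2 : ((q.den:ℕ):ℝ) * (q:ℝ) = ((q.num.toNat:ℕ):ℝ) := by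
        have e1 : ((q.num.toNat:ℕ):ℤ) = q.num := Int.toNat_of_nonneg hnum
        have e2 : (q:ℚ) * (q.den:ℚ) = (q.num:ℚ) := Rat.mul_den_eq_num q
        have e3 : (q:ℝ) * ((q.den:ℕ):ℝ) = ((q.num:ℤ):ℝ) := by exact_mod_cast congrArg (fun r : ℚ => (r:ℝ)) e2
        rw [mul_comm, e3]
        exact_mod_cast congrArg (fun z : ℤ => (z:ℝ)) e1.symm
      rw [h2, hnat q.num.toNat x hx] at h1
      have hden : (0:ℝ) < ((q.den:ℕ):ℝ) := by exact_mod_cast q.pos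
      have hcast : (q:ℝ) = ((q.num:ℤ):ℝ) / ((q.den:ℕ):ℝ) := by
        rw [Rat.cast_def]
      have hnumcast : ((q.num.toNat:ℕ):ℝ) = ((q.num:ℤ):ℝ) := by
        exact_mod_cast congrArg (fun z : ℤ => (z:ℝ)) (Int.toNat_of_nonneg hnum)
      rw [hnumcast] at h1
      have hqmul : (q:ℝ) * w x = ((q.num:ℤ):ℝ) * w x / ((q.den:ℕ):ℝ) := by
        rw [hcast]; ring
      rw [hqmul, eq_div_iff (ne_of_gt hden)]
      linarith [h1]
    refine le_antisymm ?_ ?_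
    · by_contra hlt
      push_neg at hlt
      rcases eq_or_lt_of_le hxw with h0 | h0
      · obtain ⟨q, hqt⟩ := exists_rat_gt t
        have hq0 : (0:ℚ) ≤ q := by exact_mod_cast ht.trans hqt.le
        have h1 := hmt t q ht hqt.le
        rw [hq q hq0, ← h0, mul_zero] at h1
        rw [← h0, mul_zero] at hlt
        linarith
      · have hdt : t < w (t • x) / w x := (lt_div_iff₀ h0).2 (by nlinarith)
        obtain ⟨q, hq1, hq2⟩ := exists_rat_btwn hdt
        have hq0 : (0:ℚ) ≤ q := by exact_mod_cast ht.trans hq1.le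
        have h1 := hmt t q ht hq1.le
        rw [hq q hq0] at h1
        have h3 : (q:ℝ) * w x < w (t • x) := (lt_div_iff₀ h0).1 hq2
        linarith
    · by_contra hlt
      push_neg at hlt
      have h0 : 0 < w x := by
        by_contra h
        push_neg at h
        have hz : w x = 0 := le_antisymm h hxw
        rw [hz, mul_zero] at hlt
        exact absurd hlt (not_lt.2 (hwnn _ (smul_nonneg ht hx)))
      have hdt : w (t • x) / w x < t := (div_lt_iff₀ h0).2 (by nlinarith)
      have hd0 : 0 ≤ w (t • x) / w x := div_nonneg (hwnn _ (smul_nonneg ht hx)) hxw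
      obtain ⟨q, hq1, hq2⟩ := exists_rat_btwn hdt
      have hq0 : (0:ℚ) ≤ q := by exact_mod_cast hd0.trans hq1.le
      have hq0' : (0:ℝ) ≤ (q:ℝ) := by exact_mod_cast hq0
      have h1 := hmt q t hq0' hq2.le
      rw [hq q hq0] at h1
      have h3 : w (t • x) < (q:ℝ) * w x := by
        have := (div_lt_iff₀ h0).1 hq1
        nlinarith
      linarith
  -- extension to all of ℝ^d
  set pos : (Fin d → ℝ) → (Fin d → ℝ) := fun x i => max (x i) 0 with hposdef
  set neg : (Fin d → ℝ) → (Fin d → ℝ) := fun x i => max (-(x i)) 0 with hnegdef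
  have hposnn : ∀ x : Fin d → ℝ, 0 ≤ pos x := fun x i => le_max_right _ _
  have hnegnn : ∀ x : Fin d → ℝ, 0 ≤ neg x := fun x i => le_max_right _ _
  set v : (Fin d → ℝ) → ℝ := fun x => w (pos x) - w (neg x) with hvdef
  have hmax : ∀ s : ℝ, max s 0 = (s + |s|) / 2 := by
    intro s
    rcases le_total 0 s with h | h
    · rw [max_eq_left h, abs_of_nonneg h]; ring
    · rw [max_eq_right h, abs_of_nonpos h]; ring
  have hsmax : ∀ e s : ℝ, 0 ≤ e → max (e * s) 0 = e * max s 0 := by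
    intro e s he
    rw [hmax, hmax, abs_mul, abs_of_nonneg he]; ring
  have hvadd : ∀ x y : Fin d → ℝ, v (x + y) = v x + v y := by
    intro x y
    have h3 : pos (x+y) + (neg x + neg y) = neg (x+y) + (pos x + pos y) := by
      funext i
      simp only [hposdef, hnegdef, Pi.add_apply]
      rw [hmax, hmax, hmax, hmax, hmax, hmax, abs_neg, abs_neg, abs_neg]
      ring
    have h1 : w (pos (x+y) + (neg x + neg y))
        = w (pos (x+y)) + (w (neg x) + w (neg y)) := by
      rw [hadd _ _ (hposnn _) (add_nonneg (hnegnn _) (hnegnn _)),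
        hadd _ _ (hnegnn x) (hnegnn y)]
    have h2 : w (neg (x+y) + (pos x + pos y))
        = w (neg (x+y)) + (w (pos x) + w (pos y)) := by
      rw [hadd _ _ (hnegnn _) (add_nonneg (hposnn _) (hposnn _)),
        hadd _ _ (hposnn x) (hposnn y)]
    rw [h3] at h1
    simp only [hvdef]
    linarith
  have hvsmul : ∀ (c : ℝ) (x : Fin d → ℝ), v (c • x) = c * v x := by
    intro c x
    rcases le_or_gt 0 c with hc | hc
    · have hp : pos (c • x) = c • pos x := by
        funext i
        simp only [hposdef, Pi.smul_apply, smul_eq_mul]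
        exact hsmax c (x i) hc
      have hn : neg (c • x) = c • neg x := by
        funext i
        simp only [hnegdef, Pi.smul_apply, smul_eq_mul]
        rw [show -(c * x i) = c * (-(x i)) by ring]
        exact hsmax c (-(x i)) hc
      simp only [hvdef, hp, hn, hhom c hc _ (hposnn x), hhom c hc _ (hnegnn x)]
      ring
    · have hc' : (0:ℝ) ≤ -c := by linarith
      have hp : pos (c • x) = (-c) • neg x := by
        funext i
        simp only [hposdef, hnegdef, Pi.smul_apply, smul_eq_mul]
        rw [show c * x i = (-c) * (-(x i)) by ring]
        exact hsmax (-c) (-(x i)) hc'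
      have hn : neg (c • x) = (-c) • pos x := by
        funext i
        simp only [hnegdef, hposdef, Pi.smul_apply, smul_eq_mul]
        rw [show -(c * x i) = (-c) * (x i) by ring]
        exact hsmax (-c) (x i) hc'
      simp only [hvdef, hp, hn, hhom (-c) hc' _ (hposnn x), hhom (-c) hc' _ (hnegnn x)]
      ring
  have hveq : ∀ x : Fin d → ℝ, 0 ≤ x → v x = w x := by
    intro x hx
    have hp : pos x = x := by
      funext i; simp only [hposdef]; exact max_eq_left (hx i)
    have hn : neg x = 0 := by
      funext i
      simp only [hnegdef, Pi.zero_apply]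
      exact max_eq_right (neg_nonpos.2 (hx i))
    simp only [hvdef, hp, hn, w0, sub_zero]
  refine ⟨u, v, hrep, hnorm, ⟨hvadd, fun c x => by simpa [smul_eq_mul] using hvsmul c x⟩, ?_⟩
  intro x hx
  rw [hveq x hx]
  exact hUW x hx
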